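/- Let (aₙ) and (bₙ) be real sequences with bₙ > 0 for all n, and suppose both power series A(x) = Σ aₙxⁿ and B(x) = Σ bₙxⁿ converge for |x| < R. If the sequence aₙ/bₙ is strictly increasing, then x ↦ A(x)/B(x) is strictly increasing on (0, R). -/
import Mathlib

lemma abs_summable_aux (a : ℕ → ℝ) (R x : ℝ) (hx : 0 ≤ x) (hxR : x < R)
    (hA : ∀ x : ℝ, |x| < R → Summable fun n => a n * x^n) :
    Summable fun n => |a n| * x^n := by
  set r := (x + R) / 2 with hr
  have hR0 : 0 < R := lt_of_le_of_lt hx hxR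
  have hr0 : 0 < r := by rw [hr]; linarith
  have hxr : x < r := by rw [hr]; linarith
  have hrR : r < R := by rw [hr]; linarith
  have hs : Summable fun n => a n * r ^ n := hA r (by rwa [abs_of_pos hr0])
  have hbd : BddAbove (Set.range fun n => |a n * r ^ n|) := by
    have := (hs.tendsto_atTop_zero.abs)
    simpa using this.bddAbove_range
  obtain ⟨C, hC⟩ := hbd
  have hC' : ∀ n, |a n * r ^ n| ≤ C := fun n => hC (Set.mem_range_self n)
  have hgeo : Summable fun n : ℕ => C * (x / r) ^ n := by
    apply Summable.mul_left
    exact summable_geometric_of_lt_one (by positivity) (by rw [div_lt_one hr0]; exact hxr)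
  apply hgeo.of_nonneg_of_le
  · intro n; positivity
  · intro n
    have h1 : |a n| * x ^ n = |a n * r ^ n| * (x / r) ^ n := by
      rw [abs_mul, abs_pow, abs_of_pos hr0, mul_assoc, ← mul_pow,
        mul_div_cancel₀ _ hr0.ne']
    rw [h1]
    apply mul_le_mul_of_nonneg_right (hC' n) (by positivity)

set_option maxHeartbeats 1000000 in
theorem ponnusamy_vuorinen (a b : ℕ → ℝ) (R : ℝ)
    (hb : ∀ n, 0 < b n)
    (hA : ∀ x : ℝ, |x| < R → Summable fun n => a n * x^n)
    (hB : ∀ x : ℝ, |x| < R → Summable fun n => b n * x^n)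
    (hmono : StrictMono fun n => a n / b n) :
    StrictMonoOn (fun x : ℝ => (∑' n, a n * x^n) / (∑' n, b n * x^n)) (Set.Ioo 0 R) := by
  rintro x ⟨hx0, hxR⟩ y ⟨hy0, hyR⟩ hxy
  -- norm-summability facts
  have nsA : ∀ z : ℝ, 0 < z → z < R → Summable fun n => ‖a n * z ^ n‖ := by
    intro z hz0 hzR
    have := abs_summable_aux a R z hz0.le hzR hA
    apply this.congr
    intro n
    rw [Real.norm_eq_abs, abs_mul, abs_pow, abs_of_pos hz0]
  have nsB : ∀ z : ℝ, 0 < z → z < R → Summable fun n => ‖b n * z ^ n‖ := by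
    intro z hz0 hzR
    have := abs_summable_aux b R z hz0.le hzR hB
    apply this.congr
    intro n
    rw [Real.norm_eq_abs, abs_mul, abs_pow, abs_of_pos hz0]
  have hBx : (0:ℝ) < ∑' n, b n * x ^ n :=
    Summable.tsum_pos (hB x (by rw [abs_of_pos hx0]; exact hxR))
      (fun n => (mul_pos (hb n) (pow_pos hx0 n)).le) 0 (mul_pos (hb 0) (pow_pos hx0 0))
  have hBy : (0:ℝ) < ∑' n, b n * y ^ n :=
    Summable.tsum_pos (hB y (by rw [abs_of_pos hy0]; exact hyR))
      (fun n => (mul_pos (hb n) (pow_pos hy0 n)).le) 0 (mul_pos (hb 0) (pow_pos hy0 0))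
  simp only
  rw [div_lt_div_iff₀ hBx hBy]
  -- express products as double sums
  set G : ℕ × ℕ → ℝ := fun p => a p.1 * x ^ p.1 * (b p.2 * y ^ p.2)
    - a p.1 * y ^ p.1 * (b p.2 * x ^ p.2) with hG
  have sG1 : Summable fun p : ℕ × ℕ => a p.1 * x ^ p.1 * (b p.2 * y ^ p.2) :=
    summable_mul_of_summable_norm (f := fun n => a n * x ^ n) (g := fun n => b n * y ^ n)
      (nsA x hx0 hxR) (nsB y hy0 hyR)
  have sG2 : Summable fun p : ℕ × ℕ => a p.1 * y ^ p.1 * (b p.2 * x ^ p.2) :=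
    summable_mul_of_summable_norm (f := fun n => a n * y ^ n) (g := fun n => b n * x ^ n)
      (nsA y hy0 hyR) (nsB x hx0 hxR)
  have sG : Summable G := sG1.sub sG2
  have key : (∑' n, a n * x ^ n) * (∑' n, b n * y ^ n)
      - (∑' n, a n * y ^ n) * (∑' n, b n * x ^ n) = ∑' p, G p := by
    rw [tsum_mul_tsum_of_summable_norm (f := fun n => a n * x ^ n)
        (g := fun n => b n * y ^ n) (nsA x hx0 hxR) (nsB y hy0 hyR),
      tsum_mul_tsum_of_summable_norm (f := fun n => a n * y ^ n)
        (g := fun n => b n * x ^ n) (nsA y hy0 hyR) (nsB x hx0 hxR),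
      ← Summable.tsum_sub sG1 sG2]
  -- the symmetrized term
  set H : ℕ × ℕ → ℝ := fun p => (a p.1 * b p.2 - a p.2 * b p.1)
    * (x ^ p.1 * y ^ p.2 - x ^ p.2 * y ^ p.1) with hH
  have hGH : ∀ p : ℕ × ℕ, G p + G p.swap = H p := by
    rintro ⟨m, n⟩; simp only [hG, hH, Prod.swap]; ring
  have hHle : ∀ p : ℕ × ℕ, H p ≤ 0 := by
    have main : ∀ m n : ℕ, m < n → H (m, n) ≤ 0 := by
      intro m n hmn
      apply mul_nonpos_of_nonpos_of_nonneg
      · have h1 : a m / b m < a n / b n := hmono hmn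
        rw [div_lt_div_iff₀ (hb m) (hb n)] at h1
        linarith
      · have h2 : x ^ (n - m) ≤ y ^ (n - m) :=
          pow_le_pow_left₀ hx0.le hxy.le _
        have hx' : x ^ n = x ^ m * x ^ (n - m) := by
          rw [← pow_add]; congr 1; omega
        have hy' : y ^ n = y ^ m * y ^ (n - m) := by
          rw [← pow_add]; congr 1; omega
        rw [hx', hy']
        have : x ^ m * y ^ m * x ^ (n - m) ≤ x ^ m * y ^ m * y ^ (n - m) := by
          apply mul_le_mul_of_nonneg_left h2 (by positivity)
        nlinarith [this]
    rintro ⟨m, n⟩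
    rcases lt_trichotomy m n with h | h | h
    · exact main m n h
    · simp [hH, h]
    · have := main n m h
      have hsym : H (m, n) = H (n, m) := by simp only [hH]; ring
      rw [hsym]; exact this
  have hH01 : H (0, 1) < 0 := by
    apply mul_neg_of_neg_of_pos
    · have h1 : a 0 / b 0 < a 1 / b 1 := hmono Nat.zero_lt_one
      rw [div_lt_div_iff₀ (hb 0) (hb 1)] at h1
      linarith
    · simpa using hxy
  have sGswap : Summable fun p : ℕ × ℕ => G p.swap :=
    (Equiv.prodComm ℕ ℕ).summable_iff.2 sG
  have sH : Summable H := by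
    apply Summable.congr (sG.add sGswap)
    intro p; exact hGH p
  have tsum_swap : (∑' p : ℕ × ℕ, G p.swap) = ∑' p, G p :=
    (Equiv.prodComm ℕ ℕ).tsum_eq G
  have hHsum_neg : (∑' p, H p) < 0 := by
    have : (0:ℝ) < ∑' p, -H p :=
      Summable.tsum_pos sH.neg (fun p => by simpa using hHle p) (0, 1) (by simpa using hH01)
    rw [tsum_neg] at this
    linarith
  have hGsum : (∑' p, G p) < 0 := by
    have h2 : (∑' p, H p) = (∑' p, G p) + ∑' p : ℕ × ℕ, G p.swap := by
      rw [← Summable.tsum_add sG sGswap]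
      exact tsum_congr fun p => (hGH p).symm
    rw [h2, tsum_swap] at hHsum_neg
    linarith
  linarith [key, hGsum]
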